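/- For every instance of the assignment problem with uncertain priorities (n agents, m ≥ n items, strict agent preferences, and a finitely supported random priority Σ), there exists a random assignment P that simultaneously satisfies ordinal efficiency (OE), stochastic envy-freeness (SEF), and ranked proportionality (PROP). (This is the guarantee of the Unit-Time Eating algorithm, Theorem on UTE.) -/

import Mathlib

open Finset

/-- `X` stochastically dominates `Y` under the ranking `π` (a bijection from items to ranks):
for every rank `t`, the cumulative probability of the `t` most-preferred items is at least
as large under `X` as under `Y`. -/
def SD {m : ℕ} (π : Equiv.Perm (Fin m)) (X Y : Fin m → ℝ) : Prop :=
  ∀ t : Fin m, ∑ r ∈ Finset.Iic t, Y (π.symm r) ≤ ∑ r ∈ Finset.Iic t, X (π.symm r)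

/-- A random assignment: an `n × m` matrix of nonnegative reals, each row summing to `1`
and each column summing to at most `1`. -/
def IsRandomAssignment {n m : ℕ} (P : Fin n → Fin m → ℝ) : Prop :=
  (∀ i j, 0 ≤ P i j) ∧ (∀ i, ∑ j, P i j = 1) ∧ (∀ j, ∑ i, P i j ≤ 1)

/-- A random priority: a (finitely supported) probability distribution over simple priorities
(bijections from agents to ranks). -/
def IsRandomPriority {n : ℕ} (ρ : Equiv.Perm (Fin n) → ℝ) : Prop :=
  (∀ σ, 0 ≤ ρ σ) ∧ (∑ σ, ρ σ = 1)

/-- A lottery: a probability distribution over simple assignments (injective maps from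
agents to items). -/
def IsLottery {n m : ℕ} (L : (Fin n → Fin m) → ℝ) : Prop :=
  (∀ f, 0 ≤ L f) ∧ (∑ f, L f = 1) ∧ (∀ f, L f ≠ 0 → Function.Injective f)

/-- The random assignment induced by a lottery: `p i j = Pr_{f ∼ L}[f i = j]`. -/
def induced {n m : ℕ} (L : (Fin n → Fin m) → ℝ) : Fin n → Fin m → ℝ :=
  fun i j => ∑ f ∈ Finset.univ.filter (fun f => f i = j), L f

/-- `rankDist ρ i r = Pr_{σ ∼ Σ}[σ i = r]`, agent `i`'s rank distribution. -/
def rankDist {n : ℕ} (ρ : Equiv.Perm (Fin n) → ℝ) (i r : Fin n) : ℝ :=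
  ∑ σ ∈ Finset.univ.filter (fun σ => σ i = r), ρ σ

/-- Ordinal efficiency: no other random assignment stochastically dominates `P`
for every agent. -/
def OE {n m : ℕ} (π : Fin n → Equiv.Perm (Fin m)) (P : Fin n → Fin m → ℝ) : Prop :=
  ¬ ∃ Q : Fin n → Fin m → ℝ, IsRandomAssignment Q ∧ Q ≠ P ∧ ∀ i, SD (π i) (Q i) (P i)

/-- Stochastic envy-freeness: whenever `i`'s rank distribution (cumulatively)
stochastically dominates `j`'s, agent `i`'s allocation stochastically dominates `j`'s
under `i`'s preferences. -/
def SEF {n m : ℕ} (π : Fin n → Equiv.Perm (Fin m)) (ρ : Equiv.Perm (Fin n) → ℝ)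
    (P : Fin n → Fin m → ℝ) : Prop :=
  ∀ i j : Fin n,
    (∀ t : Fin n, ∑ r ∈ Finset.Iic t, rankDist ρ j r ≤ ∑ r ∈ Finset.Iic t, rankDist ρ i r) →
    SD (π i) (P i) (P j)

/-- `Pr_{σ ∼ Σ}[σ i < σ j]`: the probability that agent `i` has higher priority than `j`. -/
def prHigher {n : ℕ} (ρ : Equiv.Perm (Fin n) → ℝ) (i j : Fin n) : ℝ :=
  ∑ σ ∈ Finset.univ.filter (fun σ => σ i < σ j), ρ σ

/-- `Pr_{f ∼ L}[f i ≻_i f j]`: the probability that agent `i` prefers her own item to `j`'s. -/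
def prPrefers {n m : ℕ} (π : Fin n → Equiv.Perm (Fin m)) (L : (Fin n → Fin m) → ℝ)
    (i j : Fin n) : ℝ :=
  ∑ f ∈ Finset.univ.filter (fun f => π i (f i) < π i (f j)), L f

/-- Likelihood envy-freeness: some lottery inducing `P` satisfies
`Pr[σ i < σ j] ≤ Pr[f i ≻_i f j]` for all agents `i`, `j`. -/
def LEF {n m : ℕ} (π : Fin n → Equiv.Perm (Fin m)) (ρ : Equiv.Perm (Fin n) → ℝ)
    (P : Fin n → Fin m → ℝ) : Prop :=
  ∃ L : (Fin n → Fin m) → ℝ, IsLottery L ∧ induced L = P ∧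
    ∀ i j : Fin n, prHigher ρ i j ≤ prPrefers π L i j

/-- 1-LEF: some lottery inducing `P` satisfies: whenever `i` has higher priority than `j`
with probability `1`, agent `i` prefers her item to `j`'s with probability `1`. -/
def OneLEF {n m : ℕ} (π : Fin n → Equiv.Perm (Fin m)) (ρ : Equiv.Perm (Fin n) → ℝ)
    (P : Fin n → Fin m → ℝ) : Prop :=
  ∃ L : (Fin n → Fin m) → ℝ, IsLottery L ∧ induced L = P ∧
    ∀ i j : Fin n, i ≠ j → prHigher ρ i j = 1 → prPrefers π L i j = 1

/-- The baseline allocation of agent `i`: she gets her `r`-th preferred item with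
probability `Pr[σ i = r]` (ranks beyond `n` get probability `0`). -/
def baseline {n m : ℕ} (π : Fin n → Equiv.Perm (Fin m)) (ρ : Equiv.Perm (Fin n) → ℝ)
    (i : Fin n) (j : Fin m) : ℝ :=
  ∑ σ ∈ Finset.univ.filter (fun σ => (σ i : ℕ) = (π i j : ℕ)), ρ σ

/-- Ranked proportionality: every agent's allocation stochastically dominates
her baseline allocation. -/
def PROP {n m : ℕ} (π : Fin n → Equiv.Perm (Fin m)) (ρ : Equiv.Perm (Fin n) → ℝ)
    (P : Fin n → Fin m → ℝ) : Prop :=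
  ∀ i : Fin n, SD (π i) (P i) (baseline π ρ i)

/-- Pareto efficiency of a simple assignment: no injective assignment makes every agent
weakly better off and some agent strictly better off. -/
def ParetoEff {n m : ℕ} (π : Fin n → Equiv.Perm (Fin m)) (f : Fin n → Fin m) : Prop :=
  ¬ ∃ g : Fin n → Fin m, Function.Injective g ∧
      (∀ i, g i = f i ∨ π i (g i) < π i (f i)) ∧ (∃ i, π i (g i) < π i (f i))

/-- Envy-freeness of a simple assignment with respect to a simple priority. -/
def EnvyFree {n m : ℕ} (π : Fin n → Equiv.Perm (Fin m)) (σ : Equiv.Perm (Fin n))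
    (f : Fin n → Fin m) : Prop :=
  ∀ i j : Fin n, σ i < σ j → π i (f i) < π i (f j)


noncomputable section
open scoped Classical

namespace UTE

variable {n m : ℕ}

structure St (m : ℕ) where
  r : ℕ
  u : ℝ
  c : Fin m → ℝ

/-- exhausted items -/
def Bof (c : Fin m → ℝ) : Finset (Fin m) := univ.filter (fun j => c j = 0)

/-- favorite available item -/
def fav (π : Equiv.Perm (Fin m)) (B : Finset (Fin m)) : Option (Fin m) :=
  if h : Bᶜ.Nonempty then some (π.symm ((Bᶜ.image π).min' (h.image π))) else none

lemma fav_isSome (π : Equiv.Perm (Fin m)) {B : Finset (Fin m)} (h : Bᶜ.Nonempty) :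
    ∃ j, fav π B = some j := by
  simp [fav, h]

lemma fav_not_mem {π : Equiv.Perm (Fin m)} {B : Finset (Fin m)} {j : Fin m}
    (h : fav π B = some j) : j ∉ B := by
  unfold fav at h
  split at h
  · rename_i hne
    obtain ⟨a, ha, hπ⟩ := mem_image.1 ((Bᶜ.image π).min'_mem (hne.image π))
    have : j = a := by
      have := congrArg Option.some (congrArg π.symm hπ)
      simp at this
      simp only [Option.some.injEq] at h
      rw [← h, ← this]
    rw [this]
    exact (mem_compl.1 ha)
  · exact absurd h (by simp)

lemma fav_le {π : Equiv.Perm (Fin m)} {B : Finset (Fin m)} {j : Fin m}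
    (h : fav π B = some j) {a : Fin m} (ha : a ∉ B) : π j ≤ π a := by
  unfold fav at h
  split at h
  · rename_i hne
    simp only [Option.some.injEq] at h
    have : π j = (Bᶜ.image π).min' (hne.image π) := by rw [← h]; simp
    rw [this]
    exact min'_le _ _ (mem_image_of_mem π (mem_compl.2 ha))
  · exact absurd h (by simp)

variable (S : Fin n → ℕ → ℝ) (π : Fin n → Equiv.Perm (Fin m))

/-- total eating speed directed at item j -/
def dOf (s : St m) (j : Fin m) : ℝ :=
  ∑ i ∈ univ.filter (fun i => fav (π i) (Bof s.c) = some j), S i s.r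

/-- items that can be exhausted now -/
def cand (s : St m) : Finset (Fin m) := univ.filter (fun j => 0 < dOf S π s j)

/-- length of the next phase -/
def delta (s : St m) : ℝ :=
  (insert (1 - s.u) ((cand S π s).image (fun j => s.c j / dOf S π s j))).min'
    (insert_nonempty _ _)

def step (s : St m) : St m :=
  if delta S π s = 1 - s.u then
    ⟨s.r + 1, 0, fun j => s.c j - delta S π s * dOf S π s j⟩
  else
    ⟨s.r, s.u + delta S π s, fun j => s.c j - delta S π s * dOf S π s j⟩

/-- the state sequence -/
def st : ℕ → St m
  | 0 => ⟨0, 0, fun _ => 1⟩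
  | k+1 => if (st k).r < n then step S π (st k) else st k

/-- phase length at step k (0 if finished) -/
def dk (k : ℕ) : ℝ := if (st S π k).r < n then delta S π (st S π k) else 0

/-- allocation eaten by agent i from item j during step k -/
def allock (k : ℕ) (i : Fin n) (j : Fin m) : ℝ :=
  if (st S π k).r < n ∧ fav (π i) (Bof (st S π k).c) = some j then
    dk S π k * S i (st S π k).r
  else 0

/-- number of steps that certainly suffice -/
def K : ℕ := n * (m + 1) + m + 1

/-- the UTE random assignment -/
def P (i : Fin n) (j : Fin m) : ℝ := ∑ k ∈ range (K (n := n) (m := m)), allock S π k i j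

/-- cumulative speed -/
def cum (i : Fin n) (k : ℕ) : ℝ := ∑ l ∈ range k, S i l

/-- amount eaten by agent i before step k -/
def A (i : Fin n) (k : ℕ) : ℝ := ∑ l ∈ range k, dk S π l * S i (st S π l).r

structure Inv (n : ℕ) {m : ℕ} (s : St m) : Prop where
  hu0 : 0 ≤ s.u
  hu1 : s.u < 1
  hrn : s.r ≤ n
  hru : s.r < n ∨ s.u = 0
  hc0 : ∀ j, 0 ≤ s.c j
  hc1 : ∀ j, s.c j ≤ 1
  hsum : ∑ j, s.c j = (m : ℝ) - (s.r + s.u)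


section Lemmas
variable {S} {π}

lemma dOf_nonneg (hS0 : ∀ i r, 0 ≤ S i r) (s : St m) (j : Fin m) : 0 ≤ dOf S π s j :=
  Finset.sum_nonneg fun i _ => hS0 i s.r

lemma dOf_pos_not_mem (hS0 : ∀ i r, 0 ≤ S i r) {s : St m} {j : Fin m}
    (h : 0 < dOf S π s j) : j ∉ Bof s.c := by
  by_contra hj
  have : ∃ i ∈ univ.filter (fun i => fav (π i) (Bof s.c) = some j), 0 < S i s.r := by
    by_contra hno
    push_neg at hno
    have : dOf S π s j ≤ 0 := Finset.sum_nonpos fun i hi =>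
      le_of_not_gt (fun hpos => absurd hpos (by have := hno i hi; linarith))
    linarith
  obtain ⟨i, hi, -⟩ := this
  exact fav_not_mem (mem_filter.1 hi).2 hj

lemma cand_c_pos (hS0 : ∀ i r, 0 ≤ S i r) {s : St m} (hs : Inv n s) {j : Fin m}
    (hj : j ∈ cand S π s) : 0 < s.c j := by
  have hd := (mem_filter.1 hj).2
  have hnot := dOf_pos_not_mem (π := π) hS0 hd
  have : s.c j ≠ 0 := fun h0 => hnot (by simp [Bof, h0])
  exact lt_of_le_of_ne (hs.hc0 j) (Ne.symm this)

lemma delta_le (s : St m) : delta S π s ≤ 1 - s.u :=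
  min'_le _ _ (mem_insert_self _ _)

lemma delta_le_cd {s : St m} {j : Fin m} (hj : j ∈ cand S π s) :
    delta S π s ≤ s.c j / dOf S π s j :=
  min'_le _ _ (mem_insert_of_mem (mem_image_of_mem _ hj))

lemma delta_pos (hS0 : ∀ i r, 0 ≤ S i r) {s : St m} (hs : Inv n s) : 0 < delta S π s := by
  have : ∀ x ∈ insert (1 - s.u) ((cand S π s).image (fun j => s.c j / dOf S π s j)), 0 < x := by
    intro x hx
    rcases mem_insert.1 hx with h | h
    · subst h; linarith [hs.hu1]
    · obtain ⟨j, hj, rfl⟩ := mem_image.1 h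
      exact div_pos (cand_c_pos hS0 hs hj) (mem_filter.1 hj).2
  exact this _ (min'_mem _ _)

lemma delta_mul_le (hS0 : ∀ i r, 0 ≤ S i r) {s : St m} (hs : Inv n s) (j : Fin m) :
    delta S π s * dOf S π s j ≤ s.c j := by
  rcases eq_or_lt_of_le (dOf_nonneg (π := π) hS0 s j) with h | h
  · rw [← h, mul_zero]; exact hs.hc0 j
  · have hj : j ∈ cand S π s := mem_filter.2 ⟨mem_univ _, h⟩
    have h2 := delta_le_cd (S := S) (π := π) hj
    calc delta S π s * dOf S π s j ≤ (s.c j / dOf S π s j) * dOf S π s j :=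
          mul_le_mul_of_nonneg_right h2 (le_of_lt h)
      _ = s.c j := by field_simp

lemma Bof_compl_nonempty (hmn : n ≤ m) {s : St m} (hs : Inv n s) (hr : s.r < n) :
    (Bof s.c)ᶜ.Nonempty := by
  have hru : (s.r : ℝ) + s.u < n := by
    have h1 : (s.r : ℝ) + 1 ≤ n := by exact_mod_cast hr
    linarith [hs.hu1]
  have hsum : 0 < ∑ j, s.c j := by
    rw [hs.hsum]
    have : (n : ℝ) ≤ m := by exact_mod_cast hmn
    linarith
  have : ∃ j, s.c j ≠ 0 := by
    by_contra hno
    push_neg at hno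
    simp only [hno] at hsum
    simp at hsum
  obtain ⟨j, hj⟩ := this
  exact ⟨j, by simp [Bof, hj]⟩

lemma dOf_sum (hS1 : ∀ r, r < n → ∑ i, S i r = 1) (hmn : n ≤ m) {s : St m}
    (hs : Inv n s) (hr : s.r < n) :
    ∑ j, dOf S π s j = 1 := by
  have hne := Bof_compl_nonempty hmn hs hr
  have key : ∑ j, dOf S π s j = ∑ i : Fin n, S i s.r := by
    unfold dOf
    rw [Finset.sum_comm' (s := univ) (t' := univ)
      (t := fun j => univ.filter (fun i => fav (π i) (Bof s.c) = some j))
      (s' := fun i => univ.filter (fun j => fav (π i) (Bof s.c) = some j))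
      (fun j i => by simp only [mem_filter, mem_univ, true_and]; tauto)]
    apply Finset.sum_congr rfl
    intro i _
    obtain ⟨j0, hj0⟩ := fav_isSome (π i) hne
    have : (univ.filter (fun j => fav (π i) (Bof s.c) = some j)) = {j0} := by
      ext j
      simp only [mem_filter, mem_univ, true_and, mem_singleton, hj0, Option.some.injEq]
      exact eq_comm
    rw [this, Finset.sum_singleton]
  rw [key, hS1 _ hr]


lemma step_c (s : St m) (j : Fin m) :
    (step S π s).c j = s.c j - delta S π s * dOf S π s j := by
  unfold step; split <;> rfl

lemma step_t (s : St m) :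
    ((step S π s).r : ℝ) + (step S π s).u = s.r + s.u + delta S π s := by
  unfold step
  split
  · rename_i h; push_cast; rw [h]; ring
  · push_cast; ring

lemma step_r (s : St m) : s.r ≤ (step S π s).r := by
  unfold step; split <;> simp

lemma step_r_le (s : St m) : (step S π s).r ≤ s.r + 1 := by
  unfold step; split <;> simp

lemma Inv_step (hS0 : ∀ i r, 0 ≤ S i r) (hS1 : ∀ r, r < n → ∑ i, S i r = 1)
    (hmn : n ≤ m) {s : St m} (hs : Inv n s) (hr : s.r < n) :
    Inv n (step S π s) := by
  have hd := delta_pos (π := π) hS0 hs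
  have hdle := delta_le (S := S) (π := π) s
  have hc' : ∀ j, 0 ≤ (step S π s).c j := by
    intro j
    rw [step_c]
    linarith [delta_mul_le (π := π) hS0 hs j]
  have hc1' : ∀ j, (step S π s).c j ≤ 1 := by
    intro j
    rw [step_c]
    have h1 := mul_nonneg hd.le (dOf_nonneg (π := π) hS0 s j)
    linarith [hs.hc1 j]
  have hsum' : ∑ j, (step S π s).c j = (m : ℝ) - ((step S π s).r + (step S π s).u) := by
    have : ∑ j, (step S π s).c j = (∑ j, s.c j) - delta S π s * ∑ j, dOf S π s j := by
      rw [Finset.mul_sum, ← Finset.sum_sub_distrib]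
      exact Finset.sum_congr rfl fun j _ => step_c s j
    rw [this, dOf_sum hS1 hmn hs hr, hs.hsum, mul_one]
    have := step_t (S := S) (π := π) s
    linarith
  unfold step
  split
  · rename_i h
    exact ⟨le_refl 0, one_pos, hr, Or.inr rfl, by simpa [step, h] using hc',
      by simpa [step, h] using hc1', by simpa [step, h] using hsum'⟩
  · rename_i h
    have hlt : delta S π s < 1 - s.u := lt_of_le_of_ne hdle h
    exact ⟨by show (0:ℝ) ≤ s.u + delta S π s; linarith [hs.hu0],
      by show s.u + delta S π s < 1; linarith, hs.hrn, Or.inl hr,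
      by simpa [step, h] using hc', by simpa [step, h] using hc1',
      by simpa [step, h] using hsum'⟩

lemma Bof_step_subset (hS0 : ∀ i r, 0 ≤ S i r) {s : St m} (hs : Inv n s) :
    Bof s.c ⊆ Bof (step S π s).c := by
  intro j hj
  have hc0 : s.c j = 0 := (mem_filter.1 hj).2
  have hd0 : dOf S π s j = 0 := by
    rcases eq_or_lt_of_le (dOf_nonneg (π := π) hS0 s j) with h | h
    · exact h.symm
    · exact absurd hj (dOf_pos_not_mem hS0 h)
  simp [Bof, step_c, hc0, hd0]

lemma step_grows (hS0 : ∀ i r, 0 ≤ S i r) {s : St m} (hs : Inv n s)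
    (h : delta S π s ≠ 1 - s.u) : Bof s.c ⊂ Bof (step S π s).c := by
  have hmem := min'_mem (insert (1 - s.u) ((cand S π s).image (fun j => s.c j / dOf S π s j)))
    (insert_nonempty _ _)
  rw [show (insert (1 - s.u) ((cand S π s).image (fun j => s.c j / dOf S π s j))).min'
      (insert_nonempty _ _) = delta S π s from rfl] at hmem
  rcases mem_insert.1 hmem with h' | h'
  · exact absurd h' h
  · obtain ⟨j, hj, hjeq⟩ := mem_image.1 h'
    have hdpos := (mem_filter.1 hj).2
    have hcpos := cand_c_pos hS0 hs hj
    refine ssubset_iff_of_subset (Bof_step_subset hS0 hs) |>.2 ⟨j, ?_, ?_⟩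
    · have : (step S π s).c j = 0 := by
        rw [step_c, ← hjeq]
        field_simp
        ring
      simp [Bof, this]
    · simp only [Bof, mem_filter, mem_univ, true_and]
      exact ne_of_gt hcpos


lemma Inv_st (hS0 : ∀ i r, 0 ≤ S i r) (hS1 : ∀ r, r < n → ∑ i, S i r = 1)
    (hmn : n ≤ m) : ∀ k, Inv n (st S π k)
  | 0 => by
    refine ⟨le_refl 0, one_pos, Nat.zero_le n, Or.inr rfl, fun j => by norm_num [st],
      fun j => by norm_num [st], ?_⟩
    simp [st]
  | k+1 => by
    have ih := Inv_st hS0 hS1 hmn k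
    unfold st
    split
    · exact Inv_step hS0 hS1 hmn ih (by assumption)
    · exact ih

lemma st_succ_active {k : ℕ} (h : (st S π k).r < n) :
    st S π (k+1) = step S π (st S π k) := by
  conv_lhs => rw [st]
  rw [if_pos h]

lemma st_succ_inactive {k : ℕ} (h : ¬ (st S π k).r < n) :
    st S π (k+1) = st S π k := by
  conv_lhs => rw [st]
  rw [if_neg h]

lemma st_r_mono : ∀ {k l : ℕ}, k ≤ l → (st S π k).r ≤ (st S π l).r := by
  intro k l h
  induction l with
  | zero =>
    have : k = 0 := by omega
    subst this; exact le_refl _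
  | succ l ih =>
    rcases Nat.lt_or_ge k (l+1) with h' | h'
    · have hk := ih (by omega)
      by_cases ha : (st S π l).r < n
      · rw [st_succ_active ha]; exact le_trans hk (step_r _)
      · rw [st_succ_inactive ha]; exact hk
    · have : k = l + 1 := by omega
      subst this; exact le_refl _

lemma Bof_st_mono (hS0 : ∀ i r, 0 ≤ S i r) (hS1 : ∀ r, r < n → ∑ i, S i r = 1)
    (hmn : n ≤ m) : ∀ {k l : ℕ}, k ≤ l → Bof (st S π k).c ⊆ Bof (st S π l).c := by
  intro k l h
  induction l with
  | zero =>
    have : k = 0 := by omega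
    subst this; exact subset_refl _
  | succ l ih =>
    rcases Nat.lt_or_ge k (l+1) with h' | h'
    · have hk := ih (by omega)
      by_cases ha : (st S π l).r < n
      · rw [st_succ_active ha]
        exact subset_trans hk (Bof_step_subset hS0 (Inv_st hS0 hS1 hmn l))
      · rw [st_succ_inactive ha]; exact hk
    · have : k = l + 1 := by omega
      subst this; exact subset_refl _

/-- the termination measure -/
def mu (S : Fin n → ℕ → ℝ) (π : Fin n → Equiv.Perm (Fin m)) (k : ℕ) : ℕ :=
  (n - (st S π k).r) * (m+1) + (m - (Bof (st S π k).c).card)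

lemma mu_decr (hS0 : ∀ i r, 0 ≤ S i r) (hS1 : ∀ r, r < n → ∑ i, S i r = 1)
    (hmn : n ≤ m) {k : ℕ} (h : (st S π k).r < n) :
    mu S π (k+1) < mu S π k := by
  have hInv := Inv_st (π := π) hS0 hS1 hmn k
  have hstep := st_succ_active (S := S) (π := π) h
  unfold mu
  rw [hstep]
  set s := st S π k with hs
  have hsub := Bof_step_subset (π := π) hS0 hInv
  have hcard : (Bof s.c).card ≤ (Bof (step S π s).c).card := card_le_card hsub
  have hcm : (Bof (step S π s).c).card ≤ m := by
    simpa using card_le_card (subset_univ (Bof (step S π s).c))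
  by_cases hd : delta S π s = 1 - s.u
  · -- r increments
    have hr' : (step S π s).r = s.r + 1 := by unfold step; rw [if_pos hd]
    rw [hr']
    have hnr : n - s.r = (n - (s.r + 1)) + 1 := by omega
    rw [hnr, Nat.succ_mul]
    omega
  · -- B grows
    have hgrow := step_grows (π := π) hS0 hInv hd
    have hr' : (step S π s).r = s.r := by unfold step; rw [if_neg hd]
    have hcard' : (Bof s.c).card < (Bof (step S π s).c).card := card_lt_card hgrow
    rw [hr']
    omega

lemma st_terminal (hS0 : ∀ i r, 0 ≤ S i r) (hS1 : ∀ r, r < n → ∑ i, S i r = 1)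
    (hmn : n ≤ m) : ¬ (st S π (K (n := n) (m := m))).r < n := by
  intro hK
  have hact : ∀ l, l ≤ K (n := n) (m := m) → (st S π l).r < n := fun l hl =>
    lt_of_le_of_lt (st_r_mono hl) hK
  have key : ∀ k, k ≤ K (n := n) (m := m) → mu S π k + k ≤ mu S π 0 := by
    intro k
    induction k with
    | zero => simp
    | succ k ih =>
      intro hk
      have h1 := ih (by omega)
      have h2 := mu_decr (π := π) hS0 hS1 hmn (hact k (by omega))
      omega
  have h0 : mu S π 0 = n * (m+1) + m := by
    unfold mu
    have : Bof (st S π 0).c = ∅ := by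
      ext j
      simp [Bof, st]
    rw [this]
    simp [st]
  have := key _ (le_refl _)
  rw [h0] at this
  unfold K at this
  omega

lemma dk_nonneg (hS0 : ∀ i r, 0 ≤ S i r) (hS1 : ∀ r, r < n → ∑ i, S i r = 1)
    (hmn : n ≤ m) (k : ℕ) : 0 ≤ dk S π k := by
  unfold dk
  split
  · exact (delta_pos hS0 (Inv_st hS0 hS1 hmn k)).le
  · exact le_refl 0

lemma st_c_rec (k : ℕ) (j : Fin m) :
    (st S π (k+1)).c j = (st S π k).c j - dk S π k * dOf S π (st S π k) j := by
  by_cases h : (st S π k).r < n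
  · rw [st_succ_active h, step_c]
    unfold dk
    rw [if_pos h]
  · rw [st_succ_inactive h]
    unfold dk
    rw [if_neg h]
    ring

lemma A_eq (hS0 : ∀ i r, 0 ≤ S i r) (hS1 : ∀ r, r < n → ∑ i, S i r = 1)
    (hmn : n ≤ m) (i : Fin n) :
    ∀ k, A S π i k = cum S i (st S π k).r + (st S π k).u * S i (st S π k).r
  | 0 => by simp [A, cum, st]
  | k+1 => by
    have ih := A_eq hS0 hS1 hmn i k
    have hA : A S π i (k+1) = A S π i k + dk S π k * S i (st S π k).r := by
      unfold A
      rw [Finset.sum_range_succ]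
    by_cases h : (st S π k).r < n
    · have hstep := st_succ_active (S := S) (π := π) h
      have hdk : dk S π k = delta S π (st S π k) := by unfold dk; rw [if_pos h]
      rw [hA, hstep, ih, hdk]
      set s := st S π k
      by_cases hd : delta S π s = 1 - s.u
      · have hr' : step S π s = ⟨s.r + 1, 0, fun j => s.c j - delta S π s * dOf S π s j⟩ := by
          unfold step; rw [if_pos hd]
        rw [hr', hd]
        show cum S i s.r + s.u * S i s.r + (1 - s.u) * S i s.r
          = cum S i (s.r + 1) + 0 * S i (s.r + 1)
        have : cum S i (s.r + 1) = cum S i s.r + S i s.r := by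
          unfold cum; rw [Finset.sum_range_succ]
        rw [this]; ring
      · have hr' : step S π s = ⟨s.r, s.u + delta S π s, fun j => s.c j - delta S π s * dOf S π s j⟩ := by
          unfold step; rw [if_neg hd]
        rw [hr']
        show cum S i s.r + s.u * S i s.r + delta S π s * S i s.r
          = cum S i s.r + (s.u + delta S π s) * S i s.r
        ring
    · have hstep := st_succ_inactive (S := S) (π := π) h
      have hdk : dk S π k = 0 := by unfold dk; rw [if_neg h]
      rw [hA, hstep, ih, hdk]
      ring


lemma st_K_r (hS0 : ∀ i r, 0 ≤ S i r) (hS1 : ∀ r, r < n → ∑ i, S i r = 1)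
    (hmn : n ≤ m) : (st S π (K (n := n) (m := m))).r = n ∧ (st S π (K (n := n) (m := m))).u = 0 := by
  have h1 := st_terminal (π := π) hS0 hS1 hmn
  have h2 := Inv_st (π := π) hS0 hS1 hmn (K (n := n) (m := m))
  refine ⟨le_antisymm h2.hrn (not_lt.1 h1), ?_⟩
  rcases h2.hru with h | h
  · exact absurd h h1
  · exact h

lemma st_stable (hS0 : ∀ i r, 0 ≤ S i r) (hS1 : ∀ r, r < n → ∑ i, S i r = 1)
    (hmn : n ≤ m) : ∀ {k : ℕ}, K (n := n) (m := m) ≤ k →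
    st S π k = st S π (K (n := n) (m := m)) := by
  intro k hk
  induction k with
  | zero =>
    have : K (n := n) (m := m) = 0 := by omega
    rw [this]
  | succ k ih =>
    rcases Nat.lt_or_ge k (K (n := n) (m := m)) with h | h
    · have : K (n := n) (m := m) = k + 1 := by omega
      rw [this]
    · have hik := ih h
      have hterm := st_terminal (π := π) hS0 hS1 hmn
      rw [st_succ_inactive (by rw [hik]; exact hterm), hik]

lemma allock_nonneg (hS0 : ∀ i r, 0 ≤ S i r) (hS1 : ∀ r, r < n → ∑ i, S i r = 1)
    (hmn : n ≤ m) (k : ℕ) (i : Fin n) (j : Fin m) : 0 ≤ allock S π k i j := by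
  unfold allock
  split
  · exact mul_nonneg (dk_nonneg hS0 hS1 hmn k) (hS0 i _)
  · exact le_refl 0

lemma P_nonneg (hS0 : ∀ i r, 0 ≤ S i r) (hS1 : ∀ r, r < n → ∑ i, S i r = 1)
    (hmn : n ≤ m) (i : Fin n) (j : Fin m) : 0 ≤ P S π i j :=
  Finset.sum_nonneg fun k _ => allock_nonneg hS0 hS1 hmn k i j

lemma sum_allock_j (hS0 : ∀ i r, 0 ≤ S i r) (hS1 : ∀ r, r < n → ∑ i, S i r = 1)
    (hmn : n ≤ m) (k : ℕ) (i : Fin n) :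
    ∑ j, allock S π k i j = dk S π k * S i (st S π k).r := by
  by_cases h : (st S π k).r < n
  · obtain ⟨j0, hj0⟩ := fav_isSome (π i)
      (Bof_compl_nonempty hmn (Inv_st hS0 hS1 hmn k) h)
    have : ∀ j, allock S π k i j
        = if j = j0 then dk S π k * S i (st S π k).r else 0 := by
      intro j
      unfold allock
      by_cases hj : j = j0
      · subst hj
        rw [if_pos ⟨h, hj0⟩, if_pos rfl]
      · rw [if_neg, if_neg hj]
        rintro ⟨-, hf⟩
        rw [hj0] at hf
        exact hj (Option.some.inj hf).symm
    rw [Finset.sum_congr rfl fun j _ => this j, Finset.sum_ite_eq' univ j0]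
    simp
  · have hdk : dk S π k = 0 := by unfold dk; rw [if_neg h]
    have : ∀ j : Fin m, allock S π k i j = 0 := by
      intro j
      unfold allock
      rw [if_neg (fun hh => h hh.1)]
    rw [Finset.sum_congr rfl fun j _ => this j, hdk]
    simp

lemma row_sum (hS0 : ∀ i r, 0 ≤ S i r) (hS1 : ∀ r, r < n → ∑ i, S i r = 1)
    (hmn : n ≤ m) (i : Fin n) :
    ∑ j, P S π i j = cum S i n := by
  unfold P
  rw [Finset.sum_comm]
  have : ∀ k, ∑ j, allock S π k i j = dk S π k * S i (st S π k).r :=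
    sum_allock_j hS0 hS1 hmn (i := i)
  rw [Finset.sum_congr rfl fun k _ => this k]
  have hA : A S π i (K (n := n) (m := m)) = cum S i n := by
    rw [A_eq hS0 hS1 hmn]
    obtain ⟨hr, hu⟩ := st_K_r (π := π) hS0 hS1 hmn
    rw [hr, hu]
    ring
  exact hA

lemma sum_allock_i (hS0 : ∀ i r, 0 ≤ S i r) (k : ℕ) (j : Fin m) :
    ∑ i, allock S π k i j = dk S π k * dOf S π (st S π k) j := by
  by_cases h : (st S π k).r < n
  · have : ∀ i, allock S π k i j
        = if fav (π i) (Bof (st S π k).c) = some j then dk S π k * S i (st S π k).r else 0 := by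
      intro i
      unfold allock
      by_cases hf : fav (π i) (Bof (st S π k).c) = some j
      · rw [if_pos ⟨h, hf⟩, if_pos hf]
      · rw [if_neg (fun hh => hf hh.2), if_neg hf]
    rw [Finset.sum_congr rfl fun i _ => this i, Finset.sum_ite, Finset.sum_const_zero,
      add_zero, dOf, Finset.mul_sum]
  · have hdk : dk S π k = 0 := by unfold dk; rw [if_neg h]
    have : ∀ i, allock S π k i j = 0 := by
      intro i
      unfold allock
      rw [if_neg (fun hh => h hh.1)]
    rw [Finset.sum_congr rfl fun i _ => this i, hdk]
    simp

lemma col_sum (hS0 : ∀ i r, 0 ≤ S i r) (k : ℕ) (j : Fin m) :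
    (st S π k).c j = 1 - ∑ l ∈ range k, dk S π l * dOf S π (st S π l) j := by
  induction k with
  | zero => simp [st]
  | succ k ih =>
    rw [st_c_rec, ih, Finset.sum_range_succ]
    ring

lemma col_sum_P (hS0 : ∀ i r, 0 ≤ S i r) (j : Fin m) :
    ∑ i, P S π i j = 1 - (st S π (K (n := n) (m := m))).c j := by
  unfold P
  rw [Finset.sum_comm]
  rw [Finset.sum_congr rfl fun k _ => sum_allock_i hS0 k j]
  rw [col_sum (π := π) hS0]
  ring


/-- first step at which item j is exhausted -/
def kx (S : Fin n → ℕ → ℝ) (π : Fin n → Equiv.Perm (Fin m)) (j : Fin m) : ℕ :=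
  if h : ∃ k, j ∈ Bof (st S π k).c then Nat.find h else K (n := n) (m := m) + 1

lemma kx_le {j : Fin m} {k : ℕ} (h : j ∈ Bof (st S π k).c) : kx S π j ≤ k := by
  unfold kx
  rw [dif_pos ⟨k, h⟩]
  exact Nat.find_le h

lemma kx_gt (hS0 : ∀ i r, 0 ≤ S i r) (hS1 : ∀ r, r < n → ∑ i, S i r = 1) (hmn : n ≤ m)
    {j : Fin m} {k : ℕ} (h : j ∉ Bof (st S π k).c) (hk : k ≤ K (n := n) (m := m)) :
    k < kx S π j := by
  unfold kx
  split
  · rename_i hex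
    rw [Nat.lt_find_iff]
    intro l hl hmem
    exact h (Bof_st_mono hS0 hS1 hmn hl hmem)
  · omega

lemma exhausted_full (hS0 : ∀ i r, 0 ≤ S i r) (hS1 : ∀ r, r < n → ∑ i, S i r = 1)
    (hmn : n ≤ m) {j : Fin m} {k : ℕ} (h : j ∈ Bof (st S π k).c) :
    ∑ i, P S π i j = 1 := by
  have hK : j ∈ Bof (st S π (K (n := n) (m := m))).c := by
    rcases Nat.le_total k (K (n := n) (m := m)) with hk | hk
    · exact Bof_st_mono hS0 hS1 hmn hk h
    · rwa [st_stable hS0 hS1 hmn hk] at h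
  have hc : (st S π (K (n := n) (m := m))).c j = 0 := (mem_filter.1 hK).2
  rw [col_sum_P (π := π) hS0, hc]
  ring

lemma P_pos_fav (hS0 : ∀ i r, 0 ≤ S i r) (hS1 : ∀ r, r < n → ∑ i, S i r = 1)
    (hmn : n ≤ m) {i : Fin n} {b : Fin m} (h : 0 < P S π i b) :
    ∃ k < K (n := n) (m := m),
      (st S π k).r < n ∧ fav (π i) (Bof (st S π k).c) = some b := by
  have : ∃ k ∈ range (K (n := n) (m := m)), allock S π k i b ≠ 0 := by
    by_contra hno
    push_neg at hno
    have : P S π i b = 0 := Finset.sum_eq_zero hno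
    linarith
  obtain ⟨k, hk, hne⟩ := this
  refine ⟨k, mem_range.1 hk, ?_⟩
  unfold allock at hne
  by_cases hc : (st S π k).r < n ∧ fav (π i) (Bof (st S π k).c) = some b
  · exact hc
  · rw [if_neg hc] at hne
    exact absurd rfl hne

/-- The key efficiency fact: if i gets some of b while preferring a,
then a is fully allocated and a was exhausted strictly before b. -/
lemma F3 (hS0 : ∀ i r, 0 ≤ S i r) (hS1 : ∀ r, r < n → ∑ i, S i r = 1)
    (hmn : n ≤ m) {i : Fin n} {a b : Fin m} (hb : 0 < P S π i b)
    (hab : π i a < π i b) :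
    (∑ i', P S π i' a = 1) ∧ kx S π a < kx S π b := by
  obtain ⟨k, hkK, hact, hfav⟩ := P_pos_fav hS0 hS1 hmn hb
  have hbB : b ∉ Bof (st S π k).c := fav_not_mem hfav
  have haB : a ∈ Bof (st S π k).c := by
    by_contra haB
    exact absurd (fav_le hfav haB) (not_le.2 hab)
  refine ⟨exhausted_full hS0 hS1 hmn haB, ?_⟩
  calc kx S π a ≤ k := kx_le haB
    _ < kx S π b := kx_gt hS0 hS1 hmn hbB (le_of_lt hkK)


lemma cum_mono (hS0 : ∀ i r, 0 ≤ S i r) (i : Fin n) {k l : ℕ} (h : k ≤ l) :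
    cum S i k ≤ cum S i l := by
  unfold cum
  exact Finset.sum_le_sum_of_subset_of_nonneg (by simpa using h) (fun r _ _ => hS0 i r)

lemma cum_le_one (hS0 : ∀ i r, 0 ≤ S i r) (hSz : ∀ i r, n ≤ r → S i r = 0)
    (hSrow : ∀ i, cum S i n = 1) (i : Fin n) (l : ℕ) : cum S i l ≤ 1 := by
  rcases Nat.le_total l n with h | h
  · rw [← hSrow i]
    exact cum_mono hS0 i h
  · have : cum S i l = cum S i n := by
      unfold cum
      rw [Finset.range_eq_Ico,
        ← Finset.sum_Ico_consecutive _ (Nat.zero_le n) h]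
      have : ∑ r ∈ Finset.Ico n l, S i r = 0 :=
        Finset.sum_eq_zero fun r hr => hSz i r (Finset.mem_Ico.1 hr).1
      rw [this, add_zero, Finset.range_eq_Ico]
    rw [this, hSrow i]

lemma A_dom (hS0 : ∀ i r, 0 ≤ S i r) (hS1 : ∀ r, r < n → ∑ i, S i r = 1)
    (hmn : n ≤ m) {i j' : Fin n} (hcum : ∀ l, cum S j' l ≤ cum S i l) (k : ℕ) :
    A S π j' k ≤ A S π i k := by
  rw [A_eq hS0 hS1 hmn, A_eq hS0 hS1 hmn]
  set s := st S π k
  have hInv := Inv_st (π := π) hS0 hS1 hmn k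
  have hu0 := hInv.hu0
  have hu1 := hInv.hu1
  have key : ∀ x : Fin n, cum S x s.r + s.u * S x s.r
      = (1 - s.u) * cum S x s.r + s.u * cum S x (s.r + 1) := by
    intro x
    have : cum S x (s.r + 1) = cum S x s.r + S x s.r := by
      unfold cum; rw [Finset.sum_range_succ]
    rw [this]; ring
  rw [key i, key j']
  have h1 : (1 - s.u) * cum S j' s.r ≤ (1 - s.u) * cum S i s.r :=
    mul_le_mul_of_nonneg_left (hcum _) (by linarith)
  have h2 : s.u * cum S j' (s.r + 1) ≤ s.u * cum S i (s.r + 1) :=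
    mul_le_mul_of_nonneg_left (hcum _) hu0
  linarith

section Tsum

lemma sumT_alloc_i (hS0 : ∀ i r, 0 ≤ S i r) (hS1 : ∀ r, r < n → ∑ i, S i r = 1)
    (hmn : n ≤ m) (i : Fin n) (t : Fin m) (k : ℕ) {a : Fin m} (ha : π i a ≤ t)
    (haB : a ∉ Bof (st S π k).c) :
    ∑ b ∈ univ.filter (fun b => π i b ≤ t), allock S π k i b
      = dk S π k * S i (st S π k).r := by
  by_cases h : (st S π k).r < n
  · obtain ⟨j0, hj0⟩ := fav_isSome (π i)
      (Bof_compl_nonempty hmn (Inv_st hS0 hS1 hmn k) h)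
    have hj0T : π i j0 ≤ t := le_trans (fav_le hj0 haB) ha
    have hform : ∀ b, allock S π k i b
        = if b = j0 then dk S π k * S i (st S π k).r else 0 := by
      intro b
      unfold allock
      by_cases hb : b = j0
      · subst hb; rw [if_pos ⟨h, hj0⟩, if_pos rfl]
      · rw [if_neg, if_neg hb]
        rintro ⟨-, hf⟩
        rw [hj0] at hf
        exact hb (Option.some.inj hf).symm
    rw [Finset.sum_congr rfl fun b _ => hform b, Finset.sum_ite_eq']
    rw [if_pos (by simp [hj0T])]
  · have hdk : dk S π k = 0 := by unfold dk; rw [if_neg h]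
    rw [Finset.sum_congr rfl fun b _ => (by unfold allock; rw [if_neg (fun hh => h hh.1)] :
      allock S π k i b = 0), hdk]
    simp

lemma sumT_alloc_le (hS0 : ∀ i r, 0 ≤ S i r) (hS1 : ∀ r, r < n → ∑ i, S i r = 1)
    (hmn : n ≤ m) (i j' : Fin n) (t : Fin m) (k : ℕ) :
    ∑ b ∈ univ.filter (fun b => π i b ≤ t), allock S π k j' b
      ≤ dk S π k * S j' (st S π k).r := by
  calc ∑ b ∈ univ.filter (fun b => π i b ≤ t), allock S π k j' b
      ≤ ∑ b, allock S π k j' b :=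
        Finset.sum_le_sum_of_subset_of_nonneg (filter_subset _ _)
          (fun b _ _ => allock_nonneg hS0 hS1 hmn k j' b)
    _ = dk S π k * S j' (st S π k).r := sum_allock_j hS0 hS1 hmn k j'

lemma sumT_alloc_zero {j' : Fin n} (i : Fin n) (t : Fin m) (k : ℕ)
    (h : ∀ b, π i b ≤ t → b ∈ Bof (st S π k).c) :
    ∑ b ∈ univ.filter (fun b => π i b ≤ t), allock S π k j' b = 0 := by
  apply Finset.sum_eq_zero
  intro b hb
  have hbB := h b (mem_filter.1 hb).2
  unfold allock
  rw [if_neg]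
  rintro ⟨-, hf⟩
  exact fav_not_mem hf hbB

lemma sumT_P (hS0 : ∀ i r, 0 ≤ S i r) (hS1 : ∀ r, r < n → ∑ i, S i r = 1)
    (hmn : n ≤ m) (i : Fin n) (t : Fin m) :
    ∃ ks ≤ K (n := n) (m := m),
      ((∑ b ∈ univ.filter (fun b => π i b ≤ t), P S π i b) = A S π i ks) ∧
      (∀ j', ∑ b ∈ univ.filter (fun b => π i b ≤ t), P S π j' b ≤ A S π j' ks) ∧
      ((∀ b, π i b ≤ t → b ∈ Bof (st S π ks).c) ∨ ks = K (n := n) (m := m)) := by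
  have hswap : ∀ j' : Fin n, ∑ b ∈ univ.filter (fun b => π i b ≤ t), P S π j' b
      = ∑ k ∈ range (K (n := n) (m := m)),
          ∑ b ∈ univ.filter (fun b => π i b ≤ t), allock S π k j' b := by
    intro j'
    unfold P
    rw [Finset.sum_comm]
  by_cases hex : ∃ k, ∀ b, π i b ≤ t → b ∈ Bof (st S π k).c
  · set ks := Nat.find hex with hks
    have hspec : ∀ b, π i b ≤ t → b ∈ Bof (st S π ks).c := Nat.find_spec hex
    have hksK : ks ≤ K (n := n) (m := m) := by
      obtain ⟨k0, hk0⟩ := hex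
      rcases Nat.le_total k0 (K (n := n) (m := m)) with hh | hh
      · exact le_trans (Nat.find_le hk0) hh
      · refine Nat.find_le ?_
        intro b hb
        rw [st_stable hS0 hS1 hmn (le_refl _)]
        rw [← st_stable hS0 hS1 hmn hh]
        exact hk0 b hb
    have hafter : ∀ k, ks ≤ k → ∀ b, π i b ≤ t → b ∈ Bof (st S π k).c := by
      intro k hk b hb
      exact Bof_st_mono hS0 hS1 hmn hk (hspec b hb)
    have hbefore : ∀ k, k < ks → ∃ a, π i a ≤ t ∧ a ∉ Bof (st S π k).c := by
      intro k hk
      have := Nat.find_min hex hk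
      push_neg at this
      exact this
    refine ⟨ks, hksK, ?_, ?_, Or.inl hspec⟩
    · rw [hswap]
      have hcongr : ∀ k ∈ range (K (n := n) (m := m)),
          ∑ b ∈ univ.filter (fun b => π i b ≤ t), allock S π k i b
            = if k < ks then dk S π k * S i (st S π k).r else 0 := by
        intro k _
        by_cases hk : k < ks
        · obtain ⟨a, ha, haB⟩ := hbefore k hk
          rw [if_pos hk]
          exact sumT_alloc_i hS0 hS1 hmn i t k ha haB
        · rw [if_neg hk]
          exact sumT_alloc_zero i t k (hafter k (by omega))
      rw [Finset.sum_congr rfl hcongr, Finset.sum_ite, Finset.sum_const_zero, add_zero]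
      have : (range (K (n := n) (m := m))).filter (fun k => k < ks) = range ks := by
        ext k
        simp only [mem_filter, mem_range]
        omega
      rw [this]
      rfl
    · intro j'
      rw [hswap]
      have hbound : ∀ k ∈ range (K (n := n) (m := m)),
          ∑ b ∈ univ.filter (fun b => π i b ≤ t), allock S π k j' b
            ≤ if k < ks then dk S π k * S j' (st S π k).r else 0 := by
        intro k _
        by_cases hk : k < ks
        · rw [if_pos hk]; exact sumT_alloc_le hS0 hS1 hmn i j' t k
        · rw [if_neg hk, sumT_alloc_zero i t k (hafter k (by omega))]
      calc _ ≤ ∑ k ∈ range (K (n := n) (m := m)),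
            if k < ks then dk S π k * S j' (st S π k).r else 0 :=
            Finset.sum_le_sum hbound
        _ = A S π j' ks := by
            rw [Finset.sum_ite, Finset.sum_const_zero, add_zero]
            have : (range (K (n := n) (m := m))).filter (fun k => k < ks) = range ks := by
              ext k
              simp only [mem_filter, mem_range]
              omega
            rw [this]
            rfl
  · push_neg at hex
    refine ⟨K (n := n) (m := m), le_refl _, ?_, ?_, Or.inr rfl⟩
    · rw [hswap]
      apply Finset.sum_congr rfl
      intro k _
      obtain ⟨a, ha, haB⟩ := hex k
      exact sumT_alloc_i hS0 hS1 hmn i t k ha haB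
    · intro j'
      rw [hswap]
      exact Finset.sum_le_sum fun k _ => sumT_alloc_le hS0 hS1 hmn i j' t k

lemma time_ge (hS0 : ∀ i r, 0 ≤ S i r) (hS1 : ∀ r, r < n → ∑ i, S i r = 1)
    (hmn : n ≤ m) (i : Fin n) (t : Fin m) {ks : ℕ}
    (hall : ∀ b, π i b ≤ t → b ∈ Bof (st S π ks).c) :
    (t : ℕ) + 1 ≤ (st S π ks).r := by
  have hInv := Inv_st (π := π) hS0 hS1 hmn ks
  set s := st S π ks
  have hTcard : (univ.filter (fun b => π i b ≤ t)).card = (t : ℕ) + 1 := by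
    have : univ.filter (fun b => π i b ≤ t) = (Iic t).map (π i).symm.toEmbedding := by
      ext b
      simp only [mem_filter, mem_univ, true_and, mem_map, Equiv.coe_toEmbedding, mem_Iic]
      constructor
      · intro h; exact ⟨π i b, h, by simp⟩
      · rintro ⟨r, hr, rfl⟩; simpa using hr
    rw [this, Finset.card_map, Fin.card_Iic]
  have hzero : ∑ b ∈ univ.filter (fun b => π i b ≤ t), s.c b = 0 :=
    Finset.sum_eq_zero fun b hb => (mem_filter.1 (hall b (mem_filter.1 hb).2)).2
  have hrest : ∑ b ∈ univ.filter (fun b => ¬ π i b ≤ t), s.c b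
      ≤ ((univ.filter (fun b => ¬ π i b ≤ t)).card : ℝ) := by
    have := Finset.sum_le_card_nsmul (univ.filter (fun b => ¬ π i b ≤ t)) s.c 1
      (fun b _ => hInv.hc1 b)
    simpa using this
  have hcardrest : (univ.filter (fun b => ¬ π i b ≤ t)).card = m - ((t : ℕ) + 1) := by
    have h1 := Finset.card_filter_add_card_filter_not
      (s := (univ : Finset (Fin m))) (p := fun b => π i b ≤ t)
    rw [Finset.card_univ, Fintype.card_fin] at h1
    omega
  have hsplit := Finset.sum_filter_add_sum_filter_not univ (fun b => π i b ≤ t) s.c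
  have htm : ((t : ℕ) : ℝ) + 1 ≤ m := by
    have := t.isLt
    exact_mod_cast Nat.succ_le_of_lt this
  have hsum := hInv.hsum
  have hcast : ((m - ((t : ℕ) + 1) : ℕ) : ℝ) = (m : ℝ) - ((t : ℕ) + 1) := by
    have := t.isLt
    push_cast [Nat.cast_sub (by omega : (t : ℕ) + 1 ≤ m)]
    ring
  have hle : (m : ℝ) - (s.r + s.u) ≤ (m : ℝ) - ((t : ℕ) + 1) := by
    rw [← hsum, ← hsplit, hzero, zero_add]
    calc ∑ b ∈ univ.filter (fun b => ¬ π i b ≤ t), s.c b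
        ≤ ((univ.filter (fun b => ¬ π i b ≤ t)).card : ℝ) := hrest
      _ = (m : ℝ) - ((t : ℕ) + 1) := by rw [hcardrest, hcast]
  have hru : ((t : ℕ) : ℝ) + 1 ≤ s.r + s.u := by linarith
  have : ((t : ℕ) : ℝ) < s.r := by linarith [hInv.hu1]
  exact_mod_cast Nat.succ_le_of_lt (by exact_mod_cast this)

end Tsum

section Assembly

variable {ρ : Equiv.Perm (Fin n) → ℝ}

/-- the UTE speeds -/
def Sp (ρ : Equiv.Perm (Fin n) → ℝ) (i : Fin n) (r : ℕ) : ℝ :=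
  if h : r < n then rankDist ρ i ⟨r, h⟩ else 0

lemma Sp_nonneg (hρ : IsRandomPriority ρ) (i : Fin n) (r : ℕ) : 0 ≤ Sp ρ i r := by
  unfold Sp
  split
  · exact Finset.sum_nonneg fun σ _ => hρ.1 σ
  · exact le_refl 0

lemma rankDist_eq (i : Fin n) (r : Fin n) :
    rankDist ρ i r = ∑ σ, if σ i = r then ρ σ else 0 := by
  rw [rankDist, Finset.sum_filter]

lemma Sp_col (hρ : IsRandomPriority ρ) {r : ℕ} (hr : r < n) :
    ∑ i, Sp ρ i r = 1 := by
  have : ∀ i : Fin n, Sp ρ i r = ∑ σ, if σ i = ⟨r, hr⟩ then ρ σ else 0 := by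
    intro i
    unfold Sp
    rw [dif_pos hr, rankDist_eq]
  rw [Finset.sum_congr rfl fun i _ => this i, Finset.sum_comm]
  rw [← hρ.2]
  apply Finset.sum_congr rfl
  intro σ _
  have : ∀ i : Fin n, (if σ i = ⟨r, hr⟩ then ρ σ else 0)
      = if i = σ.symm ⟨r, hr⟩ then ρ σ else 0 := by
    intro i
    congr 1
    simp [Equiv.eq_symm_apply, eq_comm]
  rw [Finset.sum_congr rfl fun i _ => this i, Finset.sum_ite_eq' univ]
  simp

/-- cumulative rank distribution as a sum over priorities -/
lemma cum_Sp (i : Fin n) (k : ℕ) :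
    cum (Sp ρ) i k = ∑ σ ∈ univ.filter (fun σ => (σ i : ℕ) < k), ρ σ := by
  induction k with
  | zero => simp [cum]
  | succ k ih =>
    have hstep : cum (Sp ρ) i (k+1) = cum (Sp ρ) i k + Sp ρ i k := by
      unfold cum; rw [Finset.sum_range_succ]
    rw [hstep, ih]
    rw [Finset.sum_filter, Finset.sum_filter]
    have hSp : Sp ρ i k = ∑ σ, if (σ i : ℕ) = k then ρ σ else 0 := by
      unfold Sp
      split
      · rename_i h
        rw [rankDist_eq]
        apply Finset.sum_congr rfl
        intro σ _
        congr 1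
        simp [Fin.ext_iff]
      · rename_i h
        symm
        apply Finset.sum_eq_zero
        intro σ _
        rw [if_neg]
        intro hh
        exact h (hh ▸ (σ i).isLt)
    rw [hSp, ← Finset.sum_add_distrib]
    apply Finset.sum_congr rfl
    intro σ _
    by_cases h1 : (σ i : ℕ) < k
    · have h3 : (σ i : ℕ) < k + 1 := by omega
      have h2 : ¬ (σ i : ℕ) = k := by omega
      simp [h1, h2, h3]
    · by_cases h2 : (σ i : ℕ) = k
      · have h3 : (σ i : ℕ) < k + 1 := by omega
        simp [h1, h2, h3]
      · have h3 : ¬ (σ i : ℕ) < k + 1 := by omega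
        simp [h1, h2, h3]

lemma cum_Sp_row (hρ : IsRandomPriority ρ) (i : Fin n) : cum (Sp ρ) i n = 1 := by
  rw [cum_Sp]
  rw [← hρ.2]
  apply Finset.sum_congr
  · ext σ
    simp [(σ i).isLt]
  · intros; rfl

lemma rank_cum_eq (i : Fin n) (t : Fin n) :
    ∑ r ∈ Finset.Iic t, rankDist ρ i r = cum (Sp ρ) i ((t : ℕ) + 1) := by
  rw [cum_Sp]
  rw [Finset.sum_congr rfl fun r _ => rankDist_eq (ρ := ρ) i r]
  rw [Finset.sum_comm]
  rw [Finset.sum_filter]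
  apply Finset.sum_congr rfl
  intro σ _
  have : ∀ r : Fin n, (if σ i = r then ρ σ else 0) = if r = σ i then ρ σ else 0 := by
    intro r; congr 1; simp [eq_comm]
  rw [Finset.sum_congr rfl fun r _ => this r, Finset.sum_ite_eq' (Finset.Iic t)]
  have hmem : σ i ∈ Finset.Iic t ↔ (σ i : ℕ) ≤ (t : ℕ) := by
    rw [Finset.mem_Iic, Fin.le_def]
  by_cases h : (σ i : ℕ) < (t : ℕ) + 1
  · rw [if_pos (hmem.2 (by omega)), if_pos h]
  · rw [if_neg (fun hh => h (by have := hmem.1 hh; omega)), if_neg h]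

lemma cum_dom (hρ : IsRandomPriority ρ) {i j : Fin n}
    (hyp : ∀ t : Fin n, ∑ r ∈ Finset.Iic t, rankDist ρ j r ≤ ∑ r ∈ Finset.Iic t, rankDist ρ i r)
    (l : ℕ) : cum (Sp ρ) j l ≤ cum (Sp ρ) i l := by
  rcases Nat.eq_zero_or_pos l with h0 | hpos
  · subst h0; simp [cum]
  rcases Nat.le_total l n with hln | hln
  · have ht : l - 1 < n := by omega
    have hl : l = ((⟨l - 1, ht⟩ : Fin n) : ℕ) + 1 := by simp; omega
    rw [hl, ← rank_cum_eq, ← rank_cum_eq]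
    exact hyp _
  · have hz : ∀ i' r, n ≤ r → Sp ρ i' r = 0 := by
      intro i' r hr
      unfold Sp
      rw [dif_neg (by omega)]
    have heq : ∀ x : Fin n, cum (Sp ρ) x l = cum (Sp ρ) x n := by
      intro x
      unfold cum
      rw [Finset.range_eq_Ico, ← Finset.sum_Ico_consecutive _ (Nat.zero_le n) hln]
      have : ∑ r ∈ Finset.Ico n l, Sp ρ x r = 0 :=
        Finset.sum_eq_zero fun r hr => hz x r (Finset.mem_Ico.1 hr).1
      rw [this, add_zero, Finset.range_eq_Ico]
    rw [heq i, heq j, cum_Sp_row hρ j, cum_Sp_row hρ i]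

lemma baseline_cum (i : Fin n) (t : Fin m) (hm : n ≤ m) :
    ∑ r ∈ Finset.Iic t, baseline π ρ i ((π i).symm r) = cum (Sp ρ) i ((t : ℕ) + 1) := by
  rw [cum_Sp]
  have hterm : ∀ r : Fin m, baseline π ρ i ((π i).symm r)
      = ∑ σ, if (σ i : ℕ) = (r : ℕ) then ρ σ else 0 := by
    intro r
    rw [baseline, Finset.sum_filter]
    apply Finset.sum_congr rfl
    intro σ _
    congr 1
    simp
  rw [Finset.sum_congr rfl fun r _ => hterm r, Finset.sum_comm, Finset.sum_filter]
  apply Finset.sum_congr rfl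
  intro σ _
  have hlt : (σ i : ℕ) < m := lt_of_lt_of_le (σ i).isLt hm
  have : ∀ r : Fin m, (if (σ i : ℕ) = (r : ℕ) then ρ σ else 0)
      = if r = ⟨(σ i : ℕ), hlt⟩ then ρ σ else 0 := by
    intro r
    congr 1
    simp [Fin.ext_iff, eq_comm]
  rw [Finset.sum_congr rfl fun r _ => this r, Finset.sum_ite_eq' (Finset.Iic t)]
  have hmem : (⟨(σ i : ℕ), hlt⟩ : Fin m) ∈ Finset.Iic t ↔ (σ i : ℕ) ≤ (t : ℕ) := by
    rw [Finset.mem_Iic, Fin.le_def]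
  by_cases h : (σ i : ℕ) < (t : ℕ) + 1
  · rw [if_pos (hmem.2 (by omega)), if_pos h]
  · rw [if_neg (fun hh => h (by have := hmem.1 hh; omega)), if_neg h]

/-- converting an SD-style sum to a filter sum -/
lemma sum_Iic_filter (πi : Equiv.Perm (Fin m)) (X : Fin m → ℝ) (t : Fin m) :
    ∑ r ∈ Finset.Iic t, X (πi.symm r) = ∑ b ∈ univ.filter (fun b => πi b ≤ t), X b := by
  have : univ.filter (fun b => πi b ≤ t) = (Finset.Iic t).map πi.symm.toEmbedding := by
    ext b
    simp only [mem_filter, mem_univ, true_and, mem_map, Equiv.coe_toEmbedding, mem_Iic]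
    constructor
    · intro h; exact ⟨πi b, h, by simp⟩
    · rintro ⟨r, hr, rfl⟩; simpa using hr
  rw [this, Finset.sum_map]
  rfl

end Assembly
end Lemmas
end UTE

theorem exists_OE_SEF_PROP (n m : ℕ) (hm : n ≤ m)
    (π : Fin n → Equiv.Perm (Fin m)) (ρ : Equiv.Perm (Fin n) → ℝ)
    (hρ : IsRandomPriority ρ) :
    ∃ P : Fin n → Fin m → ℝ,
      IsRandomAssignment P ∧ OE π P ∧ SEF π ρ P ∧ PROP π ρ P := by
  classical
  set S := UTE.Sp ρ with hSdef
  have hS0 : ∀ i r, 0 ≤ S i r := UTE.Sp_nonneg hρ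
  have hS1 : ∀ r, r < n → ∑ i, S i r = 1 := fun r hr => UTE.Sp_col hρ hr
  have hSrow : ∀ i, UTE.cum S i n = 1 := UTE.cum_Sp_row hρ
  have hSz : ∀ i r, n ≤ r → S i r = 0 := by
    intro i r hr
    rw [hSdef]
    unfold UTE.Sp
    rw [dif_neg (by omega)]
  set P := UTE.P S π with hPdef
  have hRA : IsRandomAssignment P := by
    refine ⟨fun i j => UTE.P_nonneg hS0 hS1 hm i j, fun i => ?_, fun j => ?_⟩
    · rw [hPdef, UTE.row_sum hS0 hS1 hm i, hSrow]
    · rw [hPdef, UTE.col_sum_P hS0 j]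
      have := (UTE.Inv_st (S := S) (π := π) hS0 hS1 hm (UTE.K (n := n) (m := m))).hc0 j
      linarith
  have hOE : OE π P := by
    rintro ⟨Q, hQ, hne, hdom⟩
    have hBadStep : ∀ b : Fin m, (∃ i, Q i b < P i b) →
        ∃ a : Fin m, (∃ i, Q i a < P i a) ∧ UTE.kx S π a < UTE.kx S π b := by
      rintro b ⟨i, hib⟩
      have hPb : 0 < P i b := lt_of_le_of_lt (hQ.1 i b) hib
      have hsd := hdom i (π i b)
      rw [← Finset.Iio_insert, Finset.sum_insert (by simp),
        Finset.sum_insert (by simp), Equiv.symm_apply_apply] at hsd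
      have hIio : ∑ r ∈ Finset.Iio (π i b), P i ((π i).symm r)
          < ∑ r ∈ Finset.Iio (π i b), Q i ((π i).symm r) := by linarith
      have hex : ∃ r ∈ Finset.Iio (π i b), P i ((π i).symm r) < Q i ((π i).symm r) := by
        by_contra hno
        push_neg at hno
        exact absurd (Finset.sum_le_sum hno) (not_le.2 hIio)
      obtain ⟨r, hr, hPQ⟩ := hex
      set a := (π i).symm r with hadef
      have hab : π i a < π i b := by
        rw [hadef, Equiv.apply_symm_apply]
        exact Finset.mem_Iio.1 hr
      obtain ⟨hfull, hkx⟩ := UTE.F3 hS0 hS1 hm hPb hab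
      refine ⟨a, ?_, hkx⟩
      by_contra hno
      push_neg at hno
      have hlt : ∑ i', P i' a < ∑ i', Q i' a :=
        Finset.sum_lt_sum (fun i' _ => hno i') ⟨i, Finset.mem_univ i, hPQ⟩
      rw [hfull] at hlt
      exact absurd (hQ.2.2 a) (not_le.2 hlt)
    have hinit : ∃ b : Fin m, ∃ i, Q i b < P i b := by
      by_contra hno
      push_neg at hno
      apply hne
      funext i b
      by_contra hne2
      have hlt : P i b < Q i b := lt_of_le_of_ne (hno b i) (fun hh => hne2 hh.symm)
      have : ∑ j, P i j < ∑ j, Q i j :=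
        Finset.sum_lt_sum (fun j _ => hno j i) ⟨b, Finset.mem_univ b, hlt⟩
      rw [hRA.2.1 i, hQ.2.1 i] at this
      exact absurd this (lt_irrefl 1)
    obtain ⟨b0, hb0⟩ := hinit
    have hdesc : ∀ l : ℕ, ∃ b : Fin m, (∃ i, Q i b < P i b) ∧
        UTE.kx S π b + l ≤ UTE.kx S π b0 := by
      intro l
      induction l with
      | zero => exact ⟨b0, hb0, le_refl _⟩
      | succ l ih =>
        obtain ⟨b, hb, hle⟩ := ih
        obtain ⟨a, ha, hlt⟩ := hBadStep b hb
        exact ⟨a, ha, by omega⟩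
    obtain ⟨b, -, hle⟩ := hdesc (UTE.kx S π b0 + 1)
    omega
  have hSEF : SEF π ρ P := by
    intro i j hyp t
    rw [UTE.sum_Iic_filter, UTE.sum_Iic_filter]
    obtain ⟨ks, hksK, hEq, hLe, -⟩ := UTE.sumT_P hS0 hS1 hm i t
    calc ∑ b ∈ univ.filter (fun b => π i b ≤ t), P j b
        ≤ UTE.A S π j ks := hLe j
      _ ≤ UTE.A S π i ks := UTE.A_dom hS0 hS1 hm (UTE.cum_dom hρ hyp) ks
      _ = ∑ b ∈ univ.filter (fun b => π i b ≤ t), P i b := hEq.symm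
  have hPROP : PROP π ρ P := by
    intro i t
    rw [UTE.baseline_cum i t hm, UTE.sum_Iic_filter]
    obtain ⟨ks, hksK, hEq, hLe, hdisj⟩ := UTE.sumT_P hS0 hS1 hm i t
    rw [hEq]
    rcases hdisj with hall | hK
    · have htime := UTE.time_ge hS0 hS1 hm i t hall
      rw [UTE.A_eq hS0 hS1 hm i ks]
      have h1 : UTE.cum S i ((t : ℕ) + 1) ≤ UTE.cum S i (UTE.st S π ks).r :=
        UTE.cum_mono hS0 i htime
      have h2 : 0 ≤ (UTE.st S π ks).u * S i (UTE.st S π ks).r :=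
        mul_nonneg (UTE.Inv_st hS0 hS1 hm ks).hu0 (hS0 _ _)
      linarith
    · subst hK
      rw [UTE.A_eq hS0 hS1 hm i, (UTE.st_K_r hS0 hS1 hm).1, (UTE.st_K_r hS0 hS1 hm).2]
      have hle1 := UTE.cum_le_one hS0 hSz hSrow i ((t : ℕ) + 1)
      rw [hSrow i]
      linarith
  exact ⟨P, hRA, hOE, hSEF, hPROP⟩
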